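/- Let T > 0, M ∈ ℕ with M ≥ 1, and let β : [0,T] → [0,1]^M be a measurable function such that Σ_{j=1}^M β_j(t) = 1 for almost every t ∈ [0,T]. Let 0 = t_0 < t_1 < … < t_N = T be a partition of [0,T] and set Δt = max_{i} (t_{i+1} − t_i). Then there exists a function α : [0,T] → {0,1}^M that is constant on each subinterval [t_i, t_{i+1}) and satisfies Σ_{j=1}^M α_j(t) = 1 for all t ∈ [0,T], such that max_{j=1,…,M} sup_{t ∈ [0,T]} | ∫_0^t (β_j(s) − α_j(s)) ds | ≤ (M−1)·Δt. -/

import Mathlib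

open MeasureTheory Set

noncomputable def surPick {M : ℕ} (hM : 1 ≤ M) (p : Fin M → ℝ) : Fin M :=
  (Finset.univ.exists_max_image p ⟨⟨0, hM⟩, Finset.mem_univ _⟩).choose

lemma surPick_max {M : ℕ} (hM : 1 ≤ M) (p : Fin M → ℝ) (j : Fin M) :
    p j ≤ p (surPick hM p) :=
  (Finset.univ.exists_max_image p ⟨⟨0, hM⟩, Finset.mem_univ _⟩).choose_spec.2 j
    (Finset.mem_univ _)

noncomputable def surD {M : ℕ} (hM : 1 ≤ M) (b : ℕ → Fin M → ℝ) (Δ : ℕ → ℝ) :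
    ℕ → Fin M → ℝ
  | 0 => fun _ => 0
  | n + 1 => fun j =>
      surD hM b Δ n j + b n j -
        if j = surPick hM (fun k => surD hM b Δ n k + b n k) then Δ n else 0

set_option maxHeartbeats 2000000 in
/-- Sum-up rounding (Lemma 2.1): a relaxed simplex-valued control `β` on `[0,T]` can be
approximated by a binary control `α`, piecewise constant on a given grid, with integrated
difference bounded by `(M-1) Δt`.
-/
theorem sum_up_rounding
    (T : ℝ) (hT : 0 < T) (M : ℕ) (hM : 1 ≤ M)
    (β : ℝ → Fin M → ℝ) (hβmeas : Measurable β)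
    (hβrange : ∀ t ∈ Icc (0:ℝ) T, ∀ j, β t j ∈ Icc (0:ℝ) 1)
    (hβsum : ∀ᵐ t ∂(volume.restrict (Icc (0:ℝ) T)), ∑ j, β t j = 1)
    (N : ℕ) (hN : 0 < N) (τ : Fin (N + 1) → ℝ)
    (hτ0 : τ 0 = 0) (hτN : τ (Fin.last N) = T)
    (hτmono : StrictMono τ)
    (Δt : ℝ)
    (hΔt : Δt = ⨆ i : Fin N, (τ i.succ - τ i.castSucc)) :
    ∃ α : ℝ → Fin M → ℝ,
      (∀ i : Fin N, ∀ s₁ ∈ Ico (τ i.castSucc) (τ i.succ),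
        ∀ s₂ ∈ Ico (τ i.castSucc) (τ i.succ), α s₁ = α s₂) ∧
      (∀ t ∈ Icc (0:ℝ) T, (∀ j, α t j = 0 ∨ α t j = 1) ∧ ∑ j, α t j = 1) ∧
      (∀ j : Fin M, ∀ t ∈ Icc (0:ℝ) T,
        |∫ s in (0:ℝ)..t, (β s j - α s j)| ≤ ((M : ℝ) - 1) * Δt) := by
  classical
  have hMR : (1:ℝ) ≤ (M:ℝ) := by exact_mod_cast hM
  have hMpos : (0:ℝ) < (M:ℝ) := lt_of_lt_of_le one_pos hMR
  have h1m : 0 ≤ 1 - 1/(M:ℝ) := by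
    have : 1/(M:ℝ) ≤ 1 := by rw [div_le_one hMpos]; exact hMR
    linarith
  -- the grid as a function on ℕ
  set tt : ℕ → ℝ := fun n => if h : n ≤ N then τ ⟨n, Nat.lt_succ_of_le h⟩ else T with htt
  have httn : ∀ n (h : n ≤ N), tt n = τ ⟨n, Nat.lt_succ_of_le h⟩ := fun n h => dif_pos h
  have hcs : ∀ i : Fin N, τ i.castSucc = tt i.1 := by
    intro i
    rw [httn i.1 (le_of_lt i.2)]
    exact congrArg τ (Fin.ext (by simp))
  have hsc : ∀ i : Fin N, τ i.succ = tt (i.1 + 1) := by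
    intro i
    rw [httn (i.1 + 1) i.2]
    exact congrArg τ (Fin.ext (by simp))
  have htt0 : tt 0 = 0 := by rw [httn 0 (Nat.zero_le N)]; exact hτ0
  have httN : tt N = T := by
    rw [httn N le_rfl]
    exact hτN ▸ congrArg τ (Fin.ext (by simp [Fin.last]))
  have httmono : ∀ m n : ℕ, m ≤ n → n ≤ N → tt m ≤ tt n := by
    intro m n hmn hnN
    rw [httn m (hmn.trans hnN), httn n hnN]
    exact hτmono.monotone (by rw [Fin.le_def]; exact hmn)
  have httlt : ∀ m n : ℕ, m < n → n ≤ N → tt m < tt n := by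
    intro m n hmn hnN
    rw [httn m ((le_of_lt hmn).trans hnN), httn n hnN]
    exact hτmono (by rw [Fin.lt_def]; exact hmn)
  have htmem : ∀ n, n ≤ N → tt n ∈ Icc (0:ℝ) T := by
    intro n hn
    constructor
    · rw [← htt0]; exact httmono 0 n (Nat.zero_le n) hn
    · rw [← httN]; exact httmono n N hn le_rfl
  have hΔpos : ∀ n, n < N → 0 < tt (n+1) - tt n := by
    intro n hn; have := httlt n (n+1) (Nat.lt_succ_self n) hn
    linarith
  have hΔle : ∀ n, n < N → tt (n+1) - tt n ≤ Δt := by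
    intro n hn
    have hb : BddAbove (Set.range fun i : Fin N => τ i.succ - τ i.castSucc) :=
      (Set.finite_range _).bddAbove
    have h := le_ciSup hb (⟨n, hn⟩ : Fin N)
    rw [hΔt]
    have e1 : τ (⟨n, hn⟩ : Fin N).castSucc = tt n := hcs ⟨n, hn⟩
    have e2 : τ (⟨n, hn⟩ : Fin N).succ = tt (n+1) := hsc ⟨n, hn⟩
    calc tt (n+1) - tt n = τ (⟨n, hn⟩ : Fin N).succ - τ (⟨n, hn⟩ : Fin N).castSucc := by
          rw [e1, e2]
      _ ≤ _ := h
  have hΔtpos : 0 < Δt := lt_of_lt_of_le (hΔpos 0 hN) (hΔle 0 hN)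
  -- measurability and integrability of β components
  have hβm : ∀ j, Measurable fun s => β s j := fun j => (measurable_pi_apply j).comp hβmeas
  have hIntβ : ∀ (j : Fin M) (a b : ℝ), 0 ≤ a → b ≤ T →
      IntegrableOn (fun s => β s j) (Ioc a b) := by
    intro j a b ha hb
    refine Measure.integrableOn_of_bounded (M := 1) measure_Ioc_lt_top.ne
      (hβm j).aestronglyMeasurable ?_
    refine (ae_restrict_iff' measurableSet_Ioc).mpr (Filter.Eventually.of_forall fun x hx => ?_)
    have hxm : x ∈ Icc (0:ℝ) T := ⟨ha.trans hx.1.le, hx.2.trans hb⟩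
    have h := hβrange x hxm j
    rw [Real.norm_eq_abs, abs_le]
    exact ⟨by linarith [h.1], h.2⟩
  have hβint_nonneg : ∀ (j : Fin M) (a b : ℝ), 0 ≤ a → b ≤ T →
      0 ≤ ∫ x in Ioc a b, β x j := by
    intro j a b ha hb
    refine setIntegral_nonneg measurableSet_Ioc fun x hx => ?_
    exact (hβrange x ⟨ha.trans hx.1.le, hx.2.trans hb⟩ j).1
  have hβint_le : ∀ (j : Fin M) (a b : ℝ), 0 ≤ a → a ≤ b → b ≤ T →
      ∫ x in Ioc a b, β x j ≤ b - a := by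
    intro j a b ha hab hb
    calc ∫ x in Ioc a b, β x j ≤ ∫ _x in Ioc a b, (1:ℝ) := by
          refine setIntegral_mono_on (hIntβ j a b ha hb)
            (integrableOn_const measure_Ioc_lt_top.ne) measurableSet_Ioc
            fun x hx => ?_
          exact (hβrange x ⟨ha.trans hx.1.le, hx.2.trans hb⟩ j).2
      _ = b - a := by
          rw [setIntegral_const, smul_eq_mul, Real.volume_real_Ioc,
            max_eq_left (by linarith : (0:ℝ) ≤ b - a), mul_one]
  have hsplitInt : ∀ (f : ℝ → ℝ) (a b c : ℝ), a ≤ b → b ≤ c →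
      IntegrableOn f (Ioc a b) → IntegrableOn f (Ioc b c) →
      ∫ x in Ioc a c, f x = (∫ x in Ioc a b, f x) + ∫ x in Ioc b c, f x := by
    intro f a b c hab hbc h1 h2
    rw [← Ioc_union_Ioc_eq_Ioc hab hbc,
      setIntegral_union (Ioc_disjoint_Ioc.mpr ((min_le_left _ _).trans (le_max_right _ _))) measurableSet_Ioc h1 h2]
  have hbsumall : ∀ a b : ℝ, 0 ≤ a → a ≤ b → b ≤ T →
      ∑ j, ∫ x in Ioc a b, β x j = b - a := by
    intro a b h0 hab hbT
    rw [← integral_finset_sum _ (fun j _ => hIntβ j a b h0 hbT)]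
    have hsub : Ioc a b ⊆ Icc (0:ℝ) T := fun x hx => ⟨h0.trans hx.1.le, hx.2.trans hbT⟩
    have hae : ∀ᵐ x ∂volume, x ∈ Ioc a b → ∑ j, β x j = 1 :=
      (ae_restrict_iff' measurableSet_Ioc).mp (ae_restrict_of_ae_restrict_of_subset hsub hβsum)
    rw [setIntegral_congr_ae measurableSet_Ioc hae, setIntegral_const, smul_eq_mul,
      Real.volume_real_Ioc, max_eq_left (by linarith : (0:ℝ) ≤ b - a), mul_one]
  -- the sum-up-rounding recursion
  set bZ : ℕ → Fin M → ℝ := fun n j => ∫ x in Ioc (tt n) (tt (n+1)), β x j with hbZ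
  set D : ℕ → Fin M → ℝ := surD hM bZ (fun n => tt (n+1) - tt n) with hD
  set J : ℕ → Fin M := fun n => surPick hM (fun k => D n k + bZ n k) with hJ
  have hDzero : ∀ j, D 0 j = 0 := fun j => rfl
  have hDsucc : ∀ n j, D (n+1) j = D n j + bZ n j -
      if j = J n then (tt (n+1) - tt n) else 0 := fun n j => rfl
  have hpmax : ∀ n j, D n j + bZ n j ≤ D n (J n) + bZ n (J n) := by
    intro n j
    have := surPick_max hM (fun k => D n k + bZ n k) j
    simpa [hJ] using this
  have hb0 : ∀ n, n < N → ∀ j, 0 ≤ bZ n j := by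
    intro n hn j
    exact hβint_nonneg j (tt n) (tt (n+1)) (htmem n hn.le).1 (htmem (n+1) hn).2
  have hble : ∀ n, n < N → ∀ j, bZ n j ≤ tt (n+1) - tt n := by
    intro n hn j
    exact hβint_le j (tt n) (tt (n+1)) (htmem n hn.le).1
      (httmono n (n+1) (Nat.le_succ n) hn) (htmem (n+1) hn).2
  have hpsum : ∀ n, n < N → (∑ j, D n j = 0) →
      ∑ k, (D n k + bZ n k) = tt (n+1) - tt n := by
    intro n hn hs
    rw [Finset.sum_add_distrib, hs, zero_add]
    exact hbsumall (tt n) (tt (n+1)) (htmem n hn.le).1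
      (httmono n (n+1) (Nat.le_succ n) hn) (htmem (n+1) hn).2
  have hpJ0 : ∀ n, n < N → (∑ j, D n j = 0) →
      (tt (n+1) - tt n) / (M:ℝ) ≤ D n (J n) + bZ n (J n) := by
    intro n hn hs
    have h := Finset.sum_le_card_nsmul Finset.univ (fun k => D n k + bZ n k)
      (D n (J n) + bZ n (J n)) (fun k _ => hpmax n k)
    rw [hpsum n hn hs] at h
    rw [Finset.card_univ, Fintype.card_fin, nsmul_eq_mul] at h
    rw [div_le_iff₀ hMpos]
    linarith
  have hpub0 : ∀ n, n < N → (∑ j, D n j = 0) →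
      (∀ j, -((1 - 1/(M:ℝ)) * Δt) ≤ D n j) →
      ∀ j, j ≠ J n → D n j + bZ n j ≤ ((M:ℝ) - 1) * Δt / 2 := by
    intro n hn hs hlo j hne
    have hM2 : 2 ≤ M := by
      by_contra h
      have hM1 : M = 1 := by omega
      exact hne (by subst hM1; exact Subsingleton.elim j (J n))
    have hM2R : (2:ℝ) ≤ (M:ℝ) := by exact_mod_cast hM2
    set p : Fin M → ℝ := fun k => D n k + bZ n k with hp
    show p j ≤ ((M:ℝ) - 1) * Δt / 2
    have hjmem : J n ∈ Finset.univ.erase j := Finset.mem_erase.mpr ⟨Ne.symm hne, Finset.mem_univ _⟩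
    have h1 : p j + ∑ k ∈ Finset.univ.erase j, p k = ∑ k, p k :=
      Finset.add_sum_erase _ p (Finset.mem_univ j)
    have h2 : p (J n) + ∑ k ∈ (Finset.univ.erase j).erase (J n), p k
        = ∑ k ∈ Finset.univ.erase j, p k :=
      Finset.add_sum_erase _ p hjmem
    have hcard : (((Finset.univ.erase j).erase (J n)).card : ℝ) = (M:ℝ) - 2 := by
      rw [Finset.card_erase_of_mem hjmem, Finset.card_erase_of_mem (Finset.mem_univ j),
        Finset.card_univ, Fintype.card_fin]
      have : M - 1 - 1 = M - 2 := by omega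
      rw [this, Nat.cast_sub hM2]
      norm_num
    have hrest : ((M:ℝ) - 2) * (-((1 - 1/(M:ℝ)) * Δt))
        ≤ ∑ k ∈ (Finset.univ.erase j).erase (J n), p k := by
      have h := Finset.card_nsmul_le_sum ((Finset.univ.erase j).erase (J n)) p
        (-((1 - 1/(M:ℝ)) * Δt)) (fun k _ => (hlo k).trans (le_add_of_nonneg_right (hb0 n hn k)))
      rw [nsmul_eq_mul, hcard] at h
      exact h
    have hsumeq : ∑ k, p k = tt (n+1) - tt n := hpsum n hn hs
    have hmax : p j ≤ p (J n) := hpmax n j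
    have hE2 : ∑ k ∈ (Finset.univ.erase j).erase (J n), p k
        = (tt (n+1) - tt n) - p j - p (J n) := by
      rw [← hsumeq, ← h1, ← h2]; ring
    rw [hE2] at hrest
    clear_value p
    have h2p : 2 * p j ≤ (tt (n+1) - tt n) + ((M:ℝ) - 2) * ((1 - 1/(M:ℝ)) * Δt) := by
      nlinarith [hrest, hmax]
    have e1 : ((M:ℝ) - 2) * ((1 - 1/(M:ℝ)) * Δt) ≤ ((M:ℝ) - 2) * Δt := by
      have h0 : 0 ≤ 1/(M:ℝ) := by positivity
      have : (1 - 1/(M:ℝ)) * Δt ≤ Δt := by nlinarith [hΔtpos.le]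
      exact mul_le_mul_of_nonneg_left this (by linarith)
    have := hΔle n hn
    linarith
  -- the main invariant at grid points
  have key : ∀ n, n ≤ N → (∑ j, D n j = 0) ∧
      (∀ j, -((1 - 1/(M:ℝ)) * Δt) ≤ D n j) ∧
      (∀ j, D n j ≤ ((M:ℝ) - 1) * Δt / 2) := by
    intro n
    induction n with
    | zero =>
      intro _
      refine ⟨by simp [hDzero], fun j => ?_, fun j => ?_⟩
      · rw [hDzero]
        have : 0 ≤ (1 - 1/(M:ℝ)) * Δt := mul_nonneg h1m hΔtpos.le
        linarith
      · rw [hDzero]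
        have : 0 ≤ ((M:ℝ) - 1) * Δt := mul_nonneg (by linarith) hΔtpos.le
        linarith
    | succ n ih =>
      intro hn1
      have hn : n < N := hn1
      obtain ⟨hs, hlo, hup⟩ := ih hn.le
      refine ⟨?_, ?_, ?_⟩
      · have hsum_ite : ∑ j, (if j = J n then (tt (n+1) - tt n) else 0) = tt (n+1) - tt n := by
          rw [Finset.sum_ite_eq' Finset.univ (J n) (fun _ => tt (n+1) - tt n)]
          simp
        calc ∑ j, D (n+1) j
            = ∑ j, ((D n j + bZ n j) - if j = J n then (tt (n+1) - tt n) else 0) := by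
              refine Finset.sum_congr rfl fun j _ => ?_; rw [hDsucc]
          _ = (∑ j, (D n j + bZ n j)) - ∑ j, (if j = J n then (tt (n+1) - tt n) else 0) :=
              Finset.sum_sub_distrib _ _
          _ = 0 := by rw [hpsum n hn hs, hsum_ite]; ring
      · intro j
        by_cases hj : j = J n
        · rw [hDsucc, if_pos hj, hj]
          have hpj := hpJ0 n hn hs
          have e2 : -((1 - 1/(M:ℝ)) * Δt) ≤ (tt (n+1) - tt n) / (M:ℝ) - (tt (n+1) - tt n) := by
            have e3 : (tt (n+1) - tt n) / (M:ℝ) - (tt (n+1) - tt n)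
                = -((1 - 1/(M:ℝ)) * (tt (n+1) - tt n)) := by
              field_simp
              ring
            rw [e3]
            have : (1 - 1/(M:ℝ)) * (tt (n+1) - tt n) ≤ (1 - 1/(M:ℝ)) * Δt :=
              mul_le_mul_of_nonneg_left (hΔle n hn) h1m
            linarith
          linarith
        · rw [hDsucc, if_neg hj]
          have := hb0 n hn j
          have := hlo j
          linarith
      · intro j
        by_cases hj : j = J n
        · rw [hDsucc, if_pos hj]
          have := hble n hn j
          have := hup j
          linarith
        · rw [hDsucc, if_neg hj]
          have := hpub0 n hn hs hlo j hj
          linarith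
  -- uniqueness of the grid cell containing a point
  have huniq : ∀ (i i' : Fin N) (t : ℝ), t ∈ Ico (τ i.castSucc) (τ i.succ) →
      t ∈ Ico (τ i'.castSucc) (τ i'.succ) → i = i' := by
    intro i i' t h h'
    by_contra hne
    rcases Ne.lt_or_gt hne with hlt | hlt
    · have hv : i.1 < i'.1 := by rwa [Fin.lt_def] at hlt
      have : τ i.succ ≤ τ i'.castSucc := by
        apply hτmono.monotone
        rw [Fin.le_def]
        simp only [Fin.val_succ, Fin.coe_castSucc]
        omega
      linarith [h.2, h'.1]
    · have hv : i'.1 < i.1 := by rwa [Fin.lt_def] at hlt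
      have : τ i'.succ ≤ τ i.castSucc := by
        apply hτmono.monotone
        rw [Fin.le_def]
        simp only [Fin.val_succ, Fin.coe_castSucc]
        omega
      linarith [h'.2, h.1]
  -- definition of the binary control
  set ι : ℝ → Fin M := fun t =>
    if h : ∃ i : Fin N, t ∈ Ico (τ i.castSucc) (τ i.succ) then J (h.choose).1 else J 0 with hι
  set α : ℝ → Fin M → ℝ := fun t j => if j = ι t then 1 else 0 with hα
  have hιval : ∀ (i : Fin N), ∀ t ∈ Ico (τ i.castSucc) (τ i.succ), ι t = J i.1 := by
    intro i t ht
    have hex : ∃ i : Fin N, t ∈ Ico (τ i.castSucc) (τ i.succ) := ⟨i, ht⟩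
    rw [hι]
    dsimp only
    rw [dif_pos hex, huniq hex.choose i t hex.choose_spec ht]
  -- integral of α on a piece of a grid cell
  have hαconst : ∀ n, n < N → ∀ a b : ℝ, tt n ≤ a → a ≤ b → b ≤ tt (n+1) → ∀ j,
      IntegrableOn (fun s => α s j) (Ioc a b) ∧
      ∫ x in Ioc a b, α x j = (if j = J n then (1:ℝ) else 0) * (b - a) := by
    intro n hn a b hna hab hb1 j
    have h1 : ∀ᵐ x : ℝ, x ≠ tt (n+1) := by
      rw [ae_iff]
      simp only [not_not, Set.setOf_eq_eq_singleton]
      exact measure_singleton _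
    have hae : ∀ᵐ x ∂volume, x ∈ Ioc a b → α x j = (if j = J n then (1:ℝ) else 0) := by
      filter_upwards [h1] with x hx1 hx
      have hxI : x ∈ Ico (τ (⟨n, hn⟩ : Fin N).castSucc) (τ (⟨n, hn⟩ : Fin N).succ) := by
        rw [hcs ⟨n, hn⟩, hsc ⟨n, hn⟩]
        exact ⟨hna.trans hx.1.le, lt_of_le_of_ne (hx.2.trans hb1) hx1⟩
      rw [hα]
      dsimp only
      rw [hιval ⟨n, hn⟩ x hxI]
    have haer : (fun s => α s j) =ᵐ[volume.restrict (Ioc a b)]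
        (fun _ => if j = J n then (1:ℝ) else 0) := by
      rw [Filter.EventuallyEq]
      exact (ae_restrict_iff' measurableSet_Ioc).mpr hae
    constructor
    · exact ((integrableOn_const measure_Ioc_lt_top.ne) :
        IntegrableOn (fun _ => if j = J n then (1:ℝ) else 0) (Ioc a b) volume).congr haer.symm
    · rw [setIntegral_congr_ae measurableSet_Ioc hae, setIntegral_const, smul_eq_mul,
        Real.volume_real_Ioc, max_eq_left (by linarith : (0:ℝ) ≤ b - a), mul_comm]
  -- the grid-point identity
  have hgrid : ∀ (j : Fin M) (n : ℕ), n ≤ N →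
      IntegrableOn (fun s => α s j) (Ioc 0 (tt n)) ∧
      (∫ x in Ioc 0 (tt n), (β x j - α x j)) = D n j := by
    intro j n
    induction n with
    | zero =>
      intro _
      rw [htt0]
      constructor
      · rw [Set.Ioc_self]; exact integrableOn_empty
      · rw [Set.Ioc_self, Measure.restrict_empty, integral_zero_measure, hDzero]
    | succ n ih =>
      intro h1
      have hn : n < N := h1
      obtain ⟨ihInt, ihEq⟩ := ih hn.le
      have h0n : 0 ≤ tt n := (htmem n hn.le).1
      have hnn1 : tt n ≤ tt (n+1) := httmono n (n+1) (Nat.le_succ n) h1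
      have hupT : tt (n+1) ≤ T := (htmem (n+1) h1).2
      have hαc := hαconst n hn (tt n) (tt (n+1)) le_rfl hnn1 le_rfl j
      have hIβ1 := hIntβ j 0 (tt n) le_rfl (htmem n hn.le).2
      have hIβ2 := hIntβ j (tt n) (tt (n+1)) h0n hupT
      have hInt1 : IntegrableOn (fun s => β s j - α s j) (Ioc 0 (tt n)) := hIβ1.sub ihInt
      have hInt2 : IntegrableOn (fun s => β s j - α s j) (Ioc (tt n) (tt (n+1))) :=
        hIβ2.sub hαc.1
      constructor
      · rw [← Ioc_union_Ioc_eq_Ioc h0n hnn1]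
        exact ihInt.union hαc.1
      · rw [hsplitInt _ 0 (tt n) (tt (n+1)) h0n hnn1 hInt1 hInt2, ihEq,
          integral_sub hIβ2 hαc.1, hαc.2, hDsucc]
        have hbb : (∫ x in Ioc (tt n) (tt (n+1)), β x j) = bZ n j := rfl
        rw [hbb]
        by_cases hj : j = J n <;> simp [hj] <;> ring
  -- locating a point in the grid
  have hfind : ∀ t : ℝ, 0 ≤ t → t < T → ∃ n, n < N ∧ tt n ≤ t ∧ t < tt (n+1) := by
    intro t ht0 htT
    have haux : ∀ m, m ≤ N → t < tt m → ∃ n, n < N ∧ tt n ≤ t ∧ t < tt (n+1) := by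
      intro m
      induction m with
      | zero => intro _ h; rw [htt0] at h; linarith
      | succ m ih =>
        intro hm h
        by_cases hc : tt m ≤ t
        · exact ⟨m, hm, hc, h⟩
        · exact ih (Nat.le_of_succ_le hm) (lt_of_not_ge hc)
    exact haux N le_rfl (httN ▸ htT)
  -- arithmetic comparisons
  have hL1 : (1 - 1/(M:ℝ)) * Δt ≤ ((M:ℝ) - 1) * Δt := by
    apply mul_le_mul_of_nonneg_right ?_ hΔtpos.le
    have h2 : (M:ℝ) * (1/(M:ℝ)) = 1 := by field_simp
    nlinarith [sq_nonneg ((M:ℝ) - 1), hMpos, h2]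
  have hMΔnn : 0 ≤ ((M:ℝ) - 1) * Δt := mul_nonneg (by linarith) hΔtpos.le
  have hhalf : ((M:ℝ) - 1) * Δt / 2 ≤ ((M:ℝ) - 1) * Δt := by linarith
  -- assemble
  refine ⟨α, ?_, ?_, ?_⟩
  · intro i s₁ hs₁ s₂ hs₂
    have hi : ι s₁ = ι s₂ := by rw [hιval i s₁ hs₁, hιval i s₂ hs₂]
    funext j
    rw [hα]
    dsimp only
    rw [hi]
  · intro t _
    constructor
    · intro j
      by_cases h : j = ι t <;> simp [hα, h]
    · rw [hα]
      dsimp only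
      rw [Finset.sum_ite_eq' Finset.univ (ι t) (fun _ => (1:ℝ))]
      simp
  · intro j t ht
    rw [intervalIntegral.integral_of_le ht.1]
    rcases eq_or_lt_of_le ht.2 with heq | htT
    · subst heq
      have hg := (hgrid j N le_rfl).2
      rw [httN] at hg
      rw [hg]
      obtain ⟨_, hlo, hup⟩ := key N le_rfl
      rw [abs_le]
      constructor
      · linarith [hlo j]
      · linarith [hup j]
    · obtain ⟨n, hn, hnt, htn1⟩ := hfind t ht.1 htT
      have h0n : 0 ≤ tt n := (htmem n hn.le).1
      have hn1T : tt (n+1) ≤ T := (htmem (n+1) hn).2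
      have htT' : t ≤ T := ht.2
      have hαc := hαconst n hn (tt n) t le_rfl hnt htn1.le j
      have hIβt := hIntβ j (tt n) t h0n htT'
      have hInt1 : IntegrableOn (fun s => β s j - α s j) (Ioc 0 (tt n)) :=
        (hIntβ j 0 (tt n) le_rfl (htmem n hn.le).2).sub (hgrid j n hn.le).1
      have hInt2 : IntegrableOn (fun s => β s j - α s j) (Ioc (tt n) t) := hIβt.sub hαc.1
      have hsplitall : ∫ x in Ioc 0 t, (β x j - α x j)
          = D n j + (∫ x in Ioc (tt n) t, β x j)
            - (if j = J n then (1:ℝ) else 0) * (t - tt n) := by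
        rw [hsplitInt _ 0 (tt n) t h0n hnt hInt1 hInt2, (hgrid j n hn.le).2,
          integral_sub hIβt hαc.1, hαc.2]
        ring
      rw [hsplitall]
      have hI0 : 0 ≤ ∫ x in Ioc (tt n) t, β x j := hβint_nonneg j (tt n) t h0n htT'
      have hIle : (∫ x in Ioc (tt n) t, β x j) ≤ t - tt n := hβint_le j (tt n) t h0n hnt htT'
      have hI2eq : bZ n j = (∫ x in Ioc (tt n) t, β x j) + ∫ x in Ioc t (tt (n+1)), β x j := by
        rw [hbZ]
        exact hsplitInt _ (tt n) t (tt (n+1)) hnt htn1.le hIβt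
          (hIntβ j t (tt (n+1)) ht.1 hn1T)
      have hI2le : (∫ x in Ioc t (tt (n+1)), β x j) ≤ tt (n+1) - t :=
        hβint_le j t (tt (n+1)) ht.1 htn1.le hn1T
      have hI2nn : 0 ≤ ∫ x in Ioc t (tt (n+1)), β x j := hβint_nonneg j t (tt (n+1)) ht.1 hn1T
      obtain ⟨hs, hlo, hup⟩ := key n hn.le
      rw [abs_le]
      by_cases hj : j = J n
      · rw [if_pos hj]
        constructor
        · have hpj := hpJ0 n hn hs
          rw [← hj] at hpj
          have e2 : -((1 - 1/(M:ℝ)) * Δt) ≤ (tt (n+1) - tt n) / (M:ℝ) - (tt (n+1) - tt n) := by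
            have e3 : (tt (n+1) - tt n) / (M:ℝ) - (tt (n+1) - tt n)
                = -((1 - 1/(M:ℝ)) * (tt (n+1) - tt n)) := by field_simp; ring
            rw [e3]
            have : (1 - 1/(M:ℝ)) * (tt (n+1) - tt n) ≤ (1 - 1/(M:ℝ)) * Δt :=
              mul_le_mul_of_nonneg_left (hΔle n hn) h1m
            linarith
          linarith [hI2eq, hI2le]
        · linarith [hup j, hIle]
      · rw [if_neg hj]
        constructor
        · linarith [hlo j, hI0]
        · have hpu := hpub0 n hn hs hlo j hj
          linarith [hI2eq, hI2nn]
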